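/- Let b, c, s ∈ ℝ with b ≠ 0 and s ≠ 0, and define f : ℝ → ℝ by f(t) = s·t + (4sc − b)/(4sb). Then f satisfies the differential equation 𝓕(t, f(t), f'(t)) = 0 for all t ∈ ℝ, where 𝓕(t, f, f') := b + 4(a·t − c)·f' − 4a·f²·f' − 4b·t·f'² − f·(2a − 4b·f' − 8a·t·f'²) with a = 0; explicitly, b − 4c·f'(t) − 4b·t·f'(t)² + 4b·f(t)·f'(t) = 0 for all t ∈ ℝ. -/
import Mathlib


/-- Section 4 of the paper, case `a = 0`: the function
`f(t) = s·t + (4sc − b)/(4sb)` solves the ODE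
`𝓕(t, f, f') = b + 4(at − c)f' − 4af²f' − 4btf'² − f(2a − 4bf' − 8atf'²) = 0` with
`a = 0`, i.e. `b − 4c·f' − 4b·t·f'² + 4b·f·f' = 0`. -/
theorem paraboloid_family_solves_ode (b c s : ℝ) (hb : b ≠ 0) (hs : s ≠ 0)
    (f : ℝ → ℝ) (hf : f = fun t => s * t + (4 * s * c - b) / (4 * s * b)) :
    ∀ t : ℝ,
      b - 4 * c * deriv f t - 4 * b * t * (deriv f t) ^ 2
        + 4 * b * f t * deriv f t = 0 := by
  intro t
  have hd : deriv f t = s := by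
    subst hf
    have h : HasDerivAt (fun t : ℝ => s * t + (4 * s * c - b) / (4 * s * b)) (s * 1) t :=
      ((hasDerivAt_id t).const_mul s).add_const _
    rw [mul_one] at h
    exact h.deriv
  subst hf
  rw [hd]
  field_simp
  ring
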